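/- arXiv:2512.19929 — 2 statements merged into one kernel-verified Lean document; each statement's English description precedes it below -/
import Mathlib

section
/- If the set of zeros of the characteristic function of a real random variable ε does not contain any nonempty open interval, then for any real random variable Z independent of ε and any real random variable Z₀ independent of ε, the equality in distribution Z + ε = Z₀ + ε (in law) implies Z = Z₀ in law. -/
open MeasureTheory ProbabilityTheory

/-- Characteristic function of a measure on `ℝ`. -/
noncomputable def charFun' (μ : Measure ℝ) (t : ℝ) : ℂ :=
  ∫ x, Complex.exp (t * x * Complex.I) ∂μ

open Real Complex Filter
open scoped Topology

noncomputable def gk (c : ℝ) (w : ℝ) : ℝ := (Real.sqrt (2*π) * c)⁻¹ * rexp (-w^2 / (2*c^2))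

lemma gk_cont (c : ℝ) : Continuous (gk c) := by
  unfold gk; fun_prop

lemma gk_nonneg {c : ℝ} (hc : 0 < c) (w : ℝ) : 0 ≤ gk c w := by
  unfold gk
  positivity

lemma gk_eq (c w : ℝ) (hc : 0 < c) :
    gk c w = (Real.sqrt (2*π) * c)⁻¹ * rexp (-(2*c^2)⁻¹ * w^2) := by
  unfold gk
  congr 1
  rw [div_eq_mul_inv, neg_mul, mul_comm]
  ring_nf

lemma gk_integrable {c : ℝ} (hc : 0 < c) : Integrable (gk c) := by
  have h : gk c = fun w => (Real.sqrt (2*π) * c)⁻¹ * rexp (-(2*c^2)⁻¹ * w^2) := by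
    funext w; exact gk_eq c w hc
  rw [h]
  exact (integrable_exp_neg_mul_sq (by positivity)).const_mul _

lemma gk_integral {c : ℝ} (hc : 0 < c) : ∫ w, gk c w = 1 := by
  have h : gk c = fun w => (Real.sqrt (2*π) * c)⁻¹ * rexp (-(2*c^2)⁻¹ * w^2) := by
    funext w; exact gk_eq c w hc
  rw [h, MeasureTheory.integral_const_mul, integral_gaussian]
  have h2 : π / (2*c^2)⁻¹ = (2*π) * c^2 := by field_simp
  have h3 : Real.sqrt (2*π*c^2) = Real.sqrt (2*π) * c := by
    rw [show (2*π*c^2 : ℝ) = (2*π) * c^2 by ring, Real.sqrt_mul (by positivity) (c^2),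
      Real.sqrt_sq hc.le]
  rw [h2, h3, inv_mul_cancel₀ (by positivity)]

lemma gk_scale {c : ℝ} (hc : 0 < c) (y : ℝ) : gk c (c*y) = c⁻¹ * gk 1 y := by
  unfold gk
  have h1 : -(c*y)^2 / (2*c^2) = -y^2 / (2*1^2) := by
    field_simp
  rw [h1]
  ring

lemma norm_cexp_aux (a t : ℝ) : ‖cexp (Complex.I * a * t)‖ = 1 := by
  have : Complex.I * (a:ℂ) * (t:ℂ) = ((a*t : ℝ):ℂ) * Complex.I := by push_cast; ring
  rw [this, Complex.norm_exp_ofReal_mul_I]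

lemma norm_cexp_aux2 (b t : ℝ) : ‖cexp (-((b:ℝ):ℂ) * (t:ℂ)^2)‖ = rexp (-b * t^2) := by
  have : -((b:ℝ):ℂ) * (t:ℂ)^2 = ((-b * t^2 : ℝ):ℂ) := by push_cast; ring
  rw [this, Complex.norm_exp, Complex.ofReal_re]

lemma gk_fourier {c : ℝ} (hc : 0 < c) (w : ℝ) :
    ((gk c w : ℝ) : ℂ) =
      ((2*π : ℝ)⁻¹ : ℂ) * ∫ t : ℝ, cexp (Complex.I * w * t) * cexp (-((c^2/2 : ℝ):ℂ) * t^2) := by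
  have hb : (0:ℝ) < ((c^2/2 : ℝ):ℂ).re := by rw [Complex.ofReal_re]; positivity
  have key := fourierIntegral_gaussian (b := ((c^2/2 : ℝ):ℂ)) hb (w : ℂ)
  rw [key]
  have h1 : ((π : ℂ) / ((c^2/2 : ℝ):ℂ)) = (((2*π/c^2 : ℝ)):ℂ) := by
    push_cast; field_simp
  have h2 : (((2*π/c^2 : ℝ)):ℂ) ^ (1/2 : ℂ) = ((Real.sqrt (2*π) / c : ℝ):ℂ) := by
    rw [show (1/2 : ℂ) = ((1/2 : ℝ):ℂ) by norm_num]
    rw [← Complex.ofReal_cpow (by positivity)]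
    congr 1
    rw [← Real.sqrt_eq_rpow, Real.sqrt_div (by positivity : (0:ℝ) ≤ 2*π), Real.sqrt_sq hc.le]
  have h3 : -((w:ℂ))^2 / (4 * ((c^2/2 : ℝ):ℂ)) = (((-w^2/(2*c^2)) : ℝ) : ℂ) := by
    have hcc : (c:ℂ) ≠ 0 := by exact_mod_cast hc.ne'
    push_cast
    field_simp
    ring
  rw [h1, h2, h3, ← Complex.ofReal_exp, ← Complex.ofReal_mul, ← Complex.ofReal_inv, ← Complex.ofReal_mul]
  rw [Complex.ofReal_inj]
  unfold gk
  set s := Real.sqrt (2*π) with hsdef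
  have hs : s * s = 2*π := Real.mul_self_sqrt (by positivity)
  have hs0 : s ≠ 0 := by rw [hsdef]; positivity
  rw [← hs]
  field_simp

lemma Phi_repr (κ : Measure ℝ) [IsProbabilityMeasure κ] {c : ℝ} (hc : 0 < c) (z : ℝ) :
    ((∫ x, gk c (z - x) ∂κ : ℝ) : ℂ) =
      ((2*π : ℝ)⁻¹ : ℂ) *
        ∫ t : ℝ, cexp (Complex.I * z * t) * cexp (-((c^2/2 : ℝ):ℂ) * t^2) * charFun' κ (-t) := by
  have hmeas : Continuous (fun p : ℝ × ℝ =>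
      cexp (Complex.I * ((z - p.1 : ℝ):ℂ) * p.2) * cexp (-((c^2/2 : ℝ):ℂ) * p.2^2)) := by
    fun_prop
  have hint : Integrable (fun p : ℝ × ℝ =>
      cexp (Complex.I * ((z - p.1 : ℝ):ℂ) * p.2) * cexp (-((c^2/2 : ℝ):ℂ) * p.2^2))
      (κ.prod volume) := by
    rw [integrable_prod_iff hmeas.aestronglyMeasurable]
    constructor
    · refine ae_of_all _ (fun x => ?_)
      refine Integrable.mono' (g := fun t => rexp (-(c^2/2) * t^2))
        (integrable_exp_neg_mul_sq (by positivity))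
        (Continuous.aestronglyMeasurable (by fun_prop)) (ae_of_all _ fun t => ?_)
      dsimp only
      rw [norm_mul, norm_cexp_aux (z-x) t, norm_cexp_aux2 (c^2/2) t, one_mul]
    · have heq : (fun x : ℝ => ∫ t : ℝ, ‖cexp (Complex.I * ((z - x : ℝ):ℂ) * (t:ℂ))
          * cexp (-((c^2/2 : ℝ):ℂ) * (t:ℂ)^2)‖)
          = fun _ : ℝ => ∫ t : ℝ, rexp (-(c^2/2) * t^2) := by
        funext x
        congr 1
        funext t
        rw [norm_mul, norm_cexp_aux (z-x) t, norm_cexp_aux2 (c^2/2) t, one_mul]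
      dsimp only
      rw [heq]
      exact integrable_const _
  have hint' : Integrable (Function.uncurry (fun x t : ℝ =>
      cexp (Complex.I * ((z - x : ℝ):ℂ) * t) * cexp (-((c^2/2 : ℝ):ℂ) * t^2)))
      (κ.prod volume) := hint
  calc ((∫ x, gk c (z - x) ∂κ : ℝ) : ℂ)
      = ∫ x, ((gk c (z - x) : ℝ) : ℂ) ∂κ := integral_ofReal.symm
    _ = ∫ x, ((2*π : ℝ)⁻¹ : ℂ) *
          (∫ t : ℝ, cexp (Complex.I * ((z - x : ℝ):ℂ) * t) * cexp (-((c^2/2 : ℝ):ℂ) * t^2)) ∂κ := by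
        congr 1; funext x; exact gk_fourier hc (z - x)
    _ = ((2*π : ℝ)⁻¹ : ℂ) * ∫ x, (∫ t : ℝ,
          cexp (Complex.I * ((z - x : ℝ):ℂ) * t) * cexp (-((c^2/2 : ℝ):ℂ) * t^2)) ∂κ := by
        rw [MeasureTheory.integral_const_mul]
    _ = ((2*π : ℝ)⁻¹ : ℂ) * ∫ t : ℝ, (∫ x,
          cexp (Complex.I * ((z - x : ℝ):ℂ) * t) * cexp (-((c^2/2 : ℝ):ℂ) * t^2) ∂κ) := by
        rw [integral_integral_swap hint']
    _ = ((2*π : ℝ)⁻¹ : ℂ) *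
        ∫ t : ℝ, cexp (Complex.I * z * t) * cexp (-((c^2/2 : ℝ):ℂ) * t^2) * charFun' κ (-t) := by
        congr 1
        refine integral_congr_ae (ae_of_all _ fun t => ?_)
        have hfact : ∀ x : ℝ, cexp (Complex.I * ((z - x : ℝ):ℂ) * t)
              * cexp (-((c^2/2 : ℝ):ℂ) * t^2)
            = (cexp (Complex.I * z * t) * cexp (-((c^2/2 : ℝ):ℂ) * t^2))
              * cexp (((-t : ℝ):ℂ) * (x:ℂ) * Complex.I) := by
          intro x
          rw [← Complex.exp_add, ← Complex.exp_add, ← Complex.exp_add]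
          congr 1
          push_cast
          ring
        simp_rw [hfact]
        rw [MeasureTheory.integral_const_mul]
        rfl

lemma J_char (κ : Measure ℝ) [IsProbabilityMeasure κ] {c : ℝ} (hc : 0 < c)
    (f : ℝ → ℝ) (hf : Continuous f) (C : ℝ) (hC : ∀ x, |f x| ≤ C) :
    ∫ x, (∫ z, f z * gk c (z - x)) ∂κ = ∫ z, f z * (∫ x, gk c (z - x) ∂κ) := by
  have hCnn : 0 ≤ C := le_trans (abs_nonneg _) (hC 0)
  have hmeas : Continuous (fun p : ℝ × ℝ => f p.2 * gk c (p.2 - p.1)) :=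
    (hf.comp continuous_snd).mul ((gk_cont c).comp (continuous_snd.sub continuous_fst))
  have hmeas' : Continuous (fun p : ℝ × ℝ => C * gk c (p.2 - p.1)) :=
    continuous_const.mul ((gk_cont c).comp (continuous_snd.sub continuous_fst))
  have hmaj : Integrable (fun p : ℝ × ℝ => C * gk c (p.2 - p.1)) (κ.prod volume) := by
    rw [integrable_prod_iff hmeas'.aestronglyMeasurable]
    constructor
    · exact ae_of_all _ fun x => ((gk_integrable hc).comp_sub_right x).const_mul C
    · have heq : (fun x : ℝ => ∫ z : ℝ, ‖C * gk c (z - x)‖) = fun _ : ℝ => C := by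
        funext x
        have h1 : ∀ z : ℝ, ‖C * gk c (z - x)‖ = C * gk c (z - x) := fun z =>
          abs_of_nonneg (mul_nonneg hCnn (gk_nonneg hc _))
        simp_rw [h1, MeasureTheory.integral_const_mul,
          integral_sub_right_eq_self (gk c) x, gk_integral hc, mul_one]
      dsimp only
      rw [heq]
      exact integrable_const _
  have hintF : Integrable (fun p : ℝ × ℝ => f p.2 * gk c (p.2 - p.1)) (κ.prod volume) := by
    refine hmaj.mono' hmeas.aestronglyMeasurable (ae_of_all _ fun p => ?_)
    have hg := gk_nonneg hc (p.2 - p.1)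
    have hb : |f p.2| * |gk c (p.2 - p.1)| ≤ C * gk c (p.2 - p.1) := by
      rw [_root_.abs_of_nonneg hg]
      exact mul_le_mul_of_nonneg_right (hC _) hg
    simpa [Real.norm_eq_abs] using hb
  have hintF' : Integrable (Function.uncurry (fun x z : ℝ => f z * gk c (z - x)))
      (κ.prod volume) := hintF
  rw [integral_integral_swap hintF']
  refine integral_congr_ae (ae_of_all _ fun z => ?_)
  exact MeasureTheory.integral_const_mul _ _

lemma J_subst (κ : Measure ℝ) [IsProbabilityMeasure κ] {c : ℝ} (hc : 0 < c)
    (f : ℝ → ℝ) :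
    ∫ x, (∫ z, f z * gk c (z - x)) ∂κ = ∫ x, (∫ y, f (x + c*y) * gk 1 y) ∂κ := by
  refine integral_congr_ae (ae_of_all _ fun x => ?_)
  dsimp only
  have e0 : ∫ z, f z * gk c (z - x) = ∫ u, f (x + u) * gk c u := by
    rw [← integral_add_left_eq_self (fun z => f z * gk c (z - x)) x]
    simp only [add_sub_cancel_left]
  have e1 := MeasureTheory.Measure.integral_comp_mul_left (fun u => f (x+u) * gk c u) c
  rw [abs_of_pos (inv_pos.mpr hc), smul_eq_mul] at e1
  have e2 : ∫ u, f (x+u) * gk c u = c * ∫ y, f (x + c*y) * gk c (c*y) := by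
    rw [e1, ← mul_assoc, mul_inv_cancel₀ hc.ne', one_mul]
  rw [e0, e2, ← MeasureTheory.integral_const_mul]
  refine integral_congr_ae (ae_of_all _ fun y => ?_)
  dsimp only
  rw [gk_scale hc]
  field_simp

lemma J_lim (κ : Measure ℝ) [IsProbabilityMeasure κ] (f : ℝ → ℝ) (hf : Continuous f)
    (C : ℝ) (hC : ∀ x, |f x| ≤ C) :
    Tendsto (fun n : ℕ => ∫ x, (∫ y, f (x + (1/((n:ℝ)+1))*y) * gk 1 y) ∂κ) atTop
      (𝓝 (∫ x, f x ∂κ)) := by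
  have hCnn : 0 ≤ C := le_trans (abs_nonneg _) (hC 0)
  have hg1 : Integrable (gk 1) := gk_integrable one_pos
  have hbnd : ∀ (c : ℝ) (x y : ℝ), ‖f (x + c*y) * gk 1 y‖ ≤ C * gk 1 y := by
    intro c x y
    rw [norm_mul, Real.norm_eq_abs, Real.norm_eq_abs, _root_.abs_of_nonneg (gk_nonneg one_pos y)]
    exact mul_le_mul_of_nonneg_right (hC _) (gk_nonneg one_pos y)
  refine tendsto_integral_of_dominated_convergence (fun _ => C) ?_ (integrable_const C) ?_ ?_
  · intro n
    refine (continuous_of_dominated (bound := fun y => C * gk 1 y) ?_ ?_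
      (hg1.const_mul C) ?_).aestronglyMeasurable
    · intro x
      exact ((hf.comp (continuous_const.add (continuous_const.mul continuous_id))).mul
        (gk_cont 1)).aestronglyMeasurable
    · intro x
      exact ae_of_all _ fun y => hbnd _ x y
    · exact ae_of_all _ fun y =>
        ((hf.comp (continuous_id.add continuous_const)).mul continuous_const)
  · intro n
    refine ae_of_all _ fun x => ?_
    calc ‖∫ y, f (x + (1/((n:ℝ)+1))*y) * gk 1 y‖
        ≤ ∫ y, C * gk 1 y :=
          norm_integral_le_of_norm_le (hg1.const_mul C) (ae_of_all _ fun y => hbnd _ x y)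
      _ = C := by rw [MeasureTheory.integral_const_mul, gk_integral one_pos, mul_one]
  · refine ae_of_all _ fun x => ?_
    have hfx : ∫ y, f x * gk 1 y = f x := by
      rw [MeasureTheory.integral_const_mul, gk_integral one_pos, mul_one]
    rw [← hfx]
    refine tendsto_integral_of_dominated_convergence (fun y => C * gk 1 y) ?_
      (hg1.const_mul C) ?_ ?_
    · intro n
      exact ((hf.comp (continuous_const.add (continuous_const.mul continuous_id))).mul
        (gk_cont 1)).aestronglyMeasurable
    · intro n
      exact ae_of_all _ fun y => hbnd _ x y
    · refine ae_of_all _ fun y => ?_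
      have hc : Tendsto (fun n : ℕ => 1/((n:ℝ)+1)) atTop (𝓝 0) :=
        tendsto_one_div_add_atTop_nhds_zero_nat
      have harg : Tendsto (fun n : ℕ => x + (1/((n:ℝ)+1))*y) atTop (𝓝 x) := by
        simpa using (hc.mul_const y).const_add x
      exact (((hf.tendsto x).comp harg).mul_const (gk 1 y))

theorem integral_eq_of_charFun_eq (μ ν : Measure ℝ) [IsProbabilityMeasure μ]
    [IsProbabilityMeasure ν] (h : ∀ t, charFun' μ t = charFun' ν t)
    (f : ℝ → ℝ) (hf : Continuous f) (C : ℝ) (hC : ∀ x, |f x| ≤ C) :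
    ∫ x, f x ∂μ = ∫ x, f x ∂ν := by
  have key : ∀ n : ℕ, ∫ x, (∫ y, f (x + (1/((n:ℝ)+1))*y) * gk 1 y) ∂μ
      = ∫ x, (∫ y, f (x + (1/((n:ℝ)+1))*y) * gk 1 y) ∂ν := by
    intro n
    have hc : (0:ℝ) < 1/((n:ℝ)+1) := by positivity
    have hPhi : ∀ z, (∫ x, gk (1/((n:ℝ)+1)) (z-x) ∂μ) = ∫ x, gk (1/((n:ℝ)+1)) (z-x) ∂ν := by
      intro z
      have h1 := Phi_repr μ hc z
      have h2 := Phi_repr ν hc z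
      simp only [h] at h1
      exact_mod_cast h1.trans h2.symm
    rw [← J_subst μ hc f, ← J_subst ν hc f, J_char μ hc f hf C hC, J_char ν hc f hf C hC]
    simp_rw [hPhi]
  have l1 := J_lim μ f hf C hC
  have l2 := J_lim ν f hf C hC
  rw [funext key] at l1
  exact tendsto_nhds_unique l1 l2

theorem measure_eq_of_charFun_eq (μ ν : Measure ℝ) [IsProbabilityMeasure μ]
    [IsProbabilityMeasure ν] (h : ∀ t, charFun' μ t = charFun' ν t) : μ = ν := by
  refine ext_of_forall_lintegral_eq_of_IsFiniteMeasure (fun f => ?_)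
  obtain ⟨C, hC⟩ := f.bounded
  set F : ℝ → ℝ := fun x => (f x : ℝ) with hF
  have hFc : Continuous F := NNReal.continuous_coe.comp f.continuous
  have hFb : ∀ x, |F x| ≤ (f 0 : ℝ) + C := by
    intro x
    rw [_root_.abs_of_nonneg (f x).coe_nonneg]
    have h1 := hC x 0
    rw [NNReal.dist_eq] at h1
    have h2 : (f x : ℝ) - f 0 ≤ C := le_trans (le_abs_self _) h1
    linarith
  have hIμ : Integrable F μ := (integrable_const ((f 0 : ℝ) + C)).mono'
    hFc.aestronglyMeasurable (ae_of_all _ fun x => by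
      simpa [Real.norm_eq_abs] using hFb x)
  have hIν : Integrable F ν := (integrable_const ((f 0 : ℝ) + C)).mono'
    hFc.aestronglyMeasurable (ae_of_all _ fun x => by
      simpa [Real.norm_eq_abs] using hFb x)
  rw [lintegral_coe_eq_integral _ hIμ, lintegral_coe_eq_integral _ hIν,
    integral_eq_of_charFun_eq μ ν h F hFc _ hFb]

lemma norm_cexp_aux3 (t x : ℝ) : ‖cexp ((t:ℂ) * (x:ℂ) * Complex.I)‖ = 1 := by
  have h : (t:ℂ) * (x:ℂ) * Complex.I = ((t*x : ℝ):ℂ) * Complex.I := by push_cast; ring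
  rw [h, Complex.norm_exp_ofReal_mul_I]

lemma charFun'_map {Ω : Type*} [MeasurableSpace Ω] (P : Measure Ω) [IsProbabilityMeasure P]
    (X : Ω → ℝ) (hX : Measurable X) (t : ℝ) :
    charFun' (P.map X) t = ∫ ω, cexp ((t:ℂ) * (X ω : ℂ) * Complex.I) ∂P := by
  unfold charFun'
  exact integral_map hX.aemeasurable (Continuous.aestronglyMeasurable (by fun_prop))

lemma charFun'_cont (κ : Measure ℝ) [IsProbabilityMeasure κ] : Continuous (charFun' κ) := by
  unfold charFun'
  refine continuous_of_dominated (bound := fun _ => 1) ?_ ?_ (integrable_const 1) ?_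
  · intro t; exact Continuous.aestronglyMeasurable (by fun_prop)
  · intro t
    exact ae_of_all _ fun x => le_of_eq (norm_cexp_aux3 t x)
  · exact ae_of_all _ fun x => by fun_prop

lemma charFun'_add_of_indep {Ω : Type*} [MeasurableSpace Ω] (P : Measure Ω)
    [IsProbabilityMeasure P] (X Y : Ω → ℝ) (hX : Measurable X) (hY : Measurable Y)
    (hindep : IndepFun X Y P) (t : ℝ) :
    charFun' (P.map (fun ω => X ω + Y ω)) t = charFun' (P.map X) t * charFun' (P.map Y) t := by
  haveI : IsProbabilityMeasure (P.map X) := Measure.isProbabilityMeasure_map hX.aemeasurable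
  haveI : IsProbabilityMeasure (P.map Y) := Measure.isProbabilityMeasure_map hY.aemeasurable
  have hmeas : Measurable (fun ω => (X ω, Y ω)) := hX.prodMk hY
  have hpair := (indepFun_iff_map_prod_eq_prod_map_map hX.aemeasurable hY.aemeasurable).mp hindep
  rw [charFun'_map P (fun ω => X ω + Y ω) (hX.add hY) t]
  calc ∫ ω, cexp ((t:ℂ) * ((X ω + Y ω : ℝ):ℂ) * Complex.I) ∂P
      = ∫ ω, cexp ((t:ℂ)*(X ω:ℂ)*Complex.I) * cexp ((t:ℂ)*(Y ω:ℂ)*Complex.I) ∂P := by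
        refine integral_congr_ae (ae_of_all _ fun ω => ?_)
        dsimp only
        rw [← Complex.exp_add]; congr 1; push_cast; ring
    _ = ∫ p : ℝ×ℝ, cexp ((t:ℂ)*(p.1:ℂ)*Complex.I) * cexp ((t:ℂ)*(p.2:ℂ)*Complex.I)
          ∂(P.map fun ω => (X ω, Y ω)) := by
        rw [integral_map hmeas.aemeasurable (Continuous.aestronglyMeasurable (by fun_prop))]
    _ = ∫ p : ℝ×ℝ, cexp ((t:ℂ)*(p.1:ℂ)*Complex.I) * cexp ((t:ℂ)*(p.2:ℂ)*Complex.I)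
          ∂((P.map X).prod (P.map Y)) := by rw [hpair]
    _ = (∫ x, cexp ((t:ℂ)*(x:ℂ)*Complex.I) ∂(P.map X))
          * ∫ y, cexp ((t:ℂ)*(y:ℂ)*Complex.I) ∂(P.map Y) :=
        integral_prod_mul (fun x : ℝ => cexp ((t:ℂ)*(x:ℂ)*Complex.I))
          (fun y : ℝ => cexp ((t:ℂ)*(y:ℂ)*Complex.I))
    _ = charFun' (P.map X) t * charFun' (P.map Y) t := rfl

/-- If the zero set of the characteristic function of `ε` contains no nonempty open interval,
then for `Z, Z₀` independent of `ε`, equality in law of `Z + ε` and `Z₀ + ε` implies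
equality in law of `Z` and `Z₀`. -/
theorem stmt0 {Ω : Type*} [MeasurableSpace Ω] (P : Measure Ω) [IsProbabilityMeasure P]
    (ε Z Z₀ : Ω → ℝ) (hε : Measurable ε) (hZ : Measurable Z) (hZ₀ : Measurable Z₀)
    (hindep : IndepFun Z ε P) (hindep₀ : IndepFun Z₀ ε P)
    (hzero : ∀ a b : ℝ, a < b → ∃ t ∈ Set.Ioo a b, charFun' (P.map ε) t ≠ 0)
    (heq : P.map (fun ω => Z ω + ε ω) = P.map (fun ω => Z₀ ω + ε ω)) :
    P.map Z = P.map Z₀ := by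
  haveI : IsProbabilityMeasure (P.map Z) := Measure.isProbabilityMeasure_map hZ.aemeasurable
  haveI : IsProbabilityMeasure (P.map Z₀) := Measure.isProbabilityMeasure_map hZ₀.aemeasurable
  haveI : IsProbabilityMeasure (P.map ε) := Measure.isProbabilityMeasure_map hε.aemeasurable
  have hmul : ∀ t, charFun' (P.map Z) t * charFun' (P.map ε) t
      = charFun' (P.map Z₀) t * charFun' (P.map ε) t := by
    intro t
    rw [← charFun'_add_of_indep P Z ε hZ hε hindep t,
      ← charFun'_add_of_indep P Z₀ ε hZ₀ hε hindep₀ t, heq]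
  have hD : Dense {t : ℝ | charFun' (P.map ε) t ≠ 0} := by
    rw [Metric.dense_iff]
    intro x r hr
    obtain ⟨t, ht, hne⟩ := hzero (x - r) (x + r) (by linarith)
    exact ⟨t, by rw [Real.ball_eq_Ioo]; exact ht, hne⟩
  have heqD : Set.EqOn (charFun' (P.map Z)) (charFun' (P.map Z₀))
      {t | charFun' (P.map ε) t ≠ 0} := fun t ht => mul_right_cancel₀ ht (hmul t)
  have hall : charFun' (P.map Z) = charFun' (P.map Z₀) :=
    Continuous.ext_on hD (charFun'_cont _) (charFun'_cont _) heqD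
  exact measure_eq_of_charFun_eq _ _ (fun t => congrFun hall t)
end

section
/- Let μ₀ be a probability measure on ℝ satisfying μ₀([a,b]) ≤ A(b−a) for all intervals [a,b] and some A > 0, let X be an ℝ^d-valued random variable with law pushing forward to μ₀ under x ↦ β_jᵀx, and let ε > 0, C_ε = (E‖X‖^p/ε)^{1/p}. Then for all t ∈ ℝ, P(|β_jᵀX − t| ≤ ε‖X‖) ≤ 2A ε^{1−1/p}(E‖X‖^p)^{1/p} + ε. -/
open MeasureTheory Set
open scoped RealInnerProductSpace

/-- If `μ₀`, the law of `β_jᵀX`, satisfies `μ₀([a,b]) ≤ A(b−a)` and `E‖X‖^p < ∞` for some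
`p > 2`, then for every `ε > 0` and `t`,
`P(|β_jᵀX − t| ≤ ε‖X‖) ≤ 2A ε^{1−1/p}(E‖X‖^p)^{1/p} + ε`. -/
theorem stmt17 {Ω : Type*} [MeasurableSpace Ω] (P : Measure Ω) [IsProbabilityMeasure P]
    {d : ℕ} (X : Ω → EuclideanSpace ℝ (Fin d)) (hX : Measurable X)
    (μ₀ : Measure ℝ) (βj : EuclideanSpace ℝ (Fin d))
    (hlaw : μ₀ = P.map (fun ω => ⟪βj, X ω⟫))
    (A p ε : ℝ) (hA : 0 < A) (hp : 2 < p) (hε : 0 < ε)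
    (hmom : Integrable (fun ω => ‖X ω‖ ^ p) P)
    (hA' : ∀ a b : ℝ, a ≤ b → (μ₀ (Icc a b)).toReal ≤ A * (b - a)) :
    ∀ t : ℝ, (P {ω | |⟪βj, X ω⟫ - t| ≤ ε * ‖X ω‖}).toReal ≤
      2 * A * ε ^ (1 - 1 / p) * (∫ ω, ‖X ω‖ ^ p ∂P) ^ (1 / p) + ε := by
  intro t
  have hp0 : 0 < p := by linarith
  set M : ℝ := ∫ ω, ‖X ω‖ ^ p ∂P with hMdef
  have hM0 : 0 ≤ M := integral_nonneg fun ω => Real.rpow_nonneg (norm_nonneg _) p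
  set C : ℝ := (M / ε) ^ (1 / p) with hCdef
  have hC0 : 0 ≤ C := Real.rpow_nonneg (div_nonneg hM0 hε.le) _
  have hf : Measurable fun ω => ⟪βj, X ω⟫ :=
    (continuous_const.inner continuous_id).measurable.comp hX
  -- inclusion into two events
  have hsub : {ω | |⟪βj, X ω⟫ - t| ≤ ε * ‖X ω‖} ⊆
      {ω | C < ‖X ω‖} ∪ (fun ω => ⟪βj, X ω⟫) ⁻¹' Icc (t - ε * C) (t + ε * C) := by
    intro ω hω
    rcases lt_or_ge C ‖X ω‖ with h | h
    · exact Or.inl h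
    · refine Or.inr ?_
      have h1 : |⟪βj, X ω⟫ - t| ≤ ε * C :=
        le_trans hω (by nlinarith [norm_nonneg (X ω)])
      rw [abs_le] at h1
      constructor <;> [linarith [h1.1]; linarith [h1.2]]
  -- bound for the second event
  have h2 : (P ((fun ω => ⟪βj, X ω⟫) ⁻¹' Icc (t - ε * C) (t + ε * C))).toReal ≤
      2 * A * ε * C := by
    have hmap : μ₀ (Icc (t - ε * C) (t + ε * C)) =
        P ((fun ω => ⟪βj, X ω⟫) ⁻¹' Icc (t - ε * C) (t + ε * C)) := by
      rw [hlaw, Measure.map_apply hf measurableSet_Icc]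
    have := hA' (t - ε * C) (t + ε * C) (by nlinarith [mul_nonneg hε.le hC0])
    rw [hmap] at this
    calc _ ≤ A * ((t + ε * C) - (t - ε * C)) := this
      _ = 2 * A * ε * C := by ring
  -- bound for the first event (Markov)
  have h1 : (P {ω | C < ‖X ω‖}).toReal ≤ ε := by
    rcases eq_or_lt_of_le hM0 with hMz | hMpos
    · -- M = 0 : ‖X‖ = 0 a.e.
      have hz : ∀ᵐ ω ∂P, ‖X ω‖ ^ p = 0 := by
        have := (integral_eq_zero_iff_of_nonneg
          (fun ω => Real.rpow_nonneg (norm_nonneg _) p) hmom).mp hMz.symm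
        exact this
      have hPz : P {ω | C < ‖X ω‖} = 0 := by
        refine measure_mono_null ?_ (by
          have : ∀ᵐ ω ∂P, ¬ (0 : ℝ) < ‖X ω‖ := by
            filter_upwards [hz] with ω h
            have : ‖X ω‖ = 0 := by
              by_contra hne
              exact hne (by
                have := Real.rpow_eq_zero_iff_of_nonneg (norm_nonneg (X ω)) |>.mp h
                exact this.1)
            simp [this]
          exact this)
        intro ω hω
        exact fun h => h (lt_of_le_of_lt hC0 hω)
      simp [hPz, hε.le]
    · have hCpos : 0 < C := Real.rpow_pos_of_pos (div_pos hMpos hε) _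
      have hCp : C ^ p = M / ε := by
        rw [hCdef, ← Real.rpow_mul (div_nonneg hM0 hε.le),
          one_div_mul_cancel hp0.ne', Real.rpow_one]
      have hsub2 : {ω | C < ‖X ω‖} ⊆ {ω | C ^ p ≤ ‖X ω‖ ^ p} := by
        intro ω hω
        exact Real.rpow_le_rpow hC0 hω.le hp0.le
      have hmarkov := mul_meas_ge_le_integral_of_nonneg
        (ae_of_all _ fun ω => Real.rpow_nonneg (norm_nonneg _) p) hmom (C ^ p)
      have hmono : (P {ω | C < ‖X ω‖}).toReal ≤ (P {ω | C ^ p ≤ ‖X ω‖ ^ p}).toReal := by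
        exact ENNReal.toReal_mono (measure_ne_top _ _) (measure_mono hsub2)
      have hCppos : 0 < C ^ p := by rw [hCp]; exact div_pos hMpos hε
      have : (P {ω | C ^ p ≤ ‖X ω‖ ^ p}).toReal ≤ M / C ^ p := by
        rw [le_div_iff₀ hCppos]
        have hmarkov' : C ^ p * (P {ω | C ^ p ≤ ‖X ω‖ ^ p}).toReal ≤ M := hmarkov
        linarith [hmarkov']
      calc (P {ω | C < ‖X ω‖}).toReal ≤ M / C ^ p := le_trans hmono this
        _ = ε := by rw [hCp, div_div_cancel₀ hMpos.ne']
  -- combine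
  have hεC : ε * C = ε ^ (1 - 1 / p) * M ^ (1 / p) := by
    rw [hCdef, Real.div_rpow hM0 hε.le, Real.rpow_sub hε, Real.rpow_one]
    field_simp
  have hunion : (P {ω | |⟪βj, X ω⟫ - t| ≤ ε * ‖X ω‖}).toReal ≤
      (P {ω | C < ‖X ω‖}).toReal +
      (P ((fun ω => ⟪βj, X ω⟫) ⁻¹' Icc (t - ε * C) (t + ε * C))).toReal := by
    rw [← ENNReal.toReal_add (measure_ne_top _ _) (measure_ne_top _ _)]
    exact ENNReal.toReal_mono (by
      exact ENNReal.add_ne_top.mpr ⟨measure_ne_top _ _, measure_ne_top _ _⟩)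
      (le_trans (measure_mono hsub) (measure_union_le _ _))
  calc (P {ω | |⟪βj, X ω⟫ - t| ≤ ε * ‖X ω‖}).toReal
      ≤ (P {ω | C < ‖X ω‖}).toReal +
        (P ((fun ω => ⟪βj, X ω⟫) ⁻¹' Icc (t - ε * C) (t + ε * C))).toReal := hunion
    _ ≤ ε + 2 * A * ε * C := add_le_add h1 h2
    _ = 2 * A * ε ^ (1 - 1 / p) * M ^ (1 / p) + ε := by
        rw [show (2 * A * ε * C : ℝ) = 2 * A * (ε * C) by ring, hεC]; ring
end
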